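/- Let v₁, v₂ : 𝕋 → ℝ be L² functions with ‖v₁‖_{L²}, ‖v₂‖_{L²} ≤ M, and let K be differentiable with bounded gradient. Then the map v ↦ v·∇(K∗v) is Lipschitz on the ball of radius M in the sense that ‖v₁∇(K∗v₁) − v₂∇(K∗v₂)‖_{L²} ≤ 2M |𝕋|^{1/2} ‖∇K‖_{L^∞} ‖v₁ − v₂‖_{L²}. -/

import Mathlib

open MeasureTheory

set_option maxHeartbeats 1000000
set_option synthInstance.maxHeartbeats 400000

def torusBox (L : ℝ) (n : ℕ) : Set (Fin n → ℝ) :=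
  Set.univ.pi fun _ => Set.Ico 0 L

def TorusPeriodic (L : ℝ) {n : ℕ} (f : (Fin n → ℝ) → ℝ) : Prop :=
  ∀ (x : Fin n → ℝ) (i : Fin n), f (x + Pi.single i L) = f x

noncomputable def torusConv (L : ℝ) {n : ℕ} (K φ : (Fin n → ℝ) → ℝ)
    (x : Fin n → ℝ) : ℝ :=
  ∫ y in torusBox L n, K (x - y) * φ y

/-- the set of periods of a function is an additive subgroup -/
def periodGroup {α : Type*} {G : Type*} [AddCommGroup G] (f : G → α) : AddSubgroup G where
  carrier := {c | ∀ x, f (x + c) = f x}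
  zero_mem' := by intro x; simp
  add_mem' := by
    intro c d hc hd x
    rw [← add_assoc, hd, hc]
  neg_mem' := by
    intro c hc x
    have := hc (x + -c)
    rw [add_assoc, neg_add_cancel, add_zero] at this
    exact this.symm

lemma lattice_mem_periodGroup {n : ℕ} {L : ℝ} {α : Type*} (f : (Fin n → ℝ) → α)
    (hf : ∀ (x : Fin n → ℝ) (i : Fin n), f (x + Pi.single i L) = f x)
    (k : Fin n → ℤ) : (fun i => (k i : ℝ) * L) ∈ periodGroup f := by
  have hsingle : ∀ i : Fin n, Pi.single i L ∈ periodGroup f := fun i x => hf x i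
  have : (fun i => (k i : ℝ) * L) = ∑ i : Fin n, k i • Pi.single i L := by
    funext j
    rw [Finset.sum_apply]
    rw [Finset.sum_eq_single j]
    · simp [mul_comm]
    · intro i _ hij
      simp [Pi.single_eq_of_ne' hij]
    · simp
  rw [this]
  exact AddSubgroup.sum_mem _ fun i _ => AddSubgroup.zsmul_mem _ (hsingle i) _

lemma fderiv_mem_periodGroup {n : ℕ} {f : (Fin n → ℝ) → ℝ} (hd : Differentiable ℝ f)
    {c : Fin n → ℝ} (hc : c ∈ periodGroup f) : c ∈ periodGroup (fderiv ℝ f) := by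
  intro x
  have heq : (fun y => f (y + c)) = f := funext hc
  have h1 : HasFDerivAt (fun y => f (y + c)) (fderiv ℝ f (x + c)) x := by
    have := ((hd (x + c)).hasFDerivAt).comp x ((hasFDerivAt_id x).add_const c)
    exact this
  calc fderiv ℝ f (x + c) = fderiv ℝ (fun y => f (y + c)) x := (h1.fderiv).symm
      _ = fderiv ℝ f x := by rw [heq]

lemma frac_mem_torusBox {n : ℕ} {L : ℝ} (hL : 0 < L) (z : Fin n → ℝ) :
    (z + fun i => ((-⌊z i / L⌋ : ℤ) : ℝ) * L) ∈ torusBox L n := by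
  rw [torusBox, Set.mem_univ_pi]
  intro i
  have h1 : (⌊z i / L⌋ : ℝ) ≤ z i / L := Int.floor_le _
  have h2 : z i / L < ⌊z i / L⌋ + 1 := Int.lt_floor_add_one _
  constructor
  · have := mul_le_mul_of_nonneg_right h1 hL.le
    rw [div_mul_cancel₀ _ hL.ne'] at this
    simp only [Pi.add_apply, Int.cast_neg, neg_mul]
    linarith
  · have := mul_lt_mul_of_pos_right h2 hL
    rw [div_mul_cancel₀ _ hL.ne'] at this
    simp only [Pi.add_apply, Int.cast_neg, neg_mul]
    ring_nf
    ring_nf at this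
    linarith

lemma null_of_periodic_null_box {n : ℕ} {L : ℝ} (hL : 0 < L) (s : Set (Fin n → ℝ))
    (hinv : ∀ (k : Fin n → ℤ) (z : Fin n → ℝ),
      z ∈ s ↔ (z + fun i => ((k i : ℤ) : ℝ) * L) ∈ s)
    (hnull : volume (s ∩ torusBox L n) = 0) : volume s = 0 := by
  have hsub : s ⊆ ⋃ k : Fin n → ℤ,
      (fun z => z + fun i => ((k i : ℤ) : ℝ) * L) ⁻¹' (s ∩ torusBox L n) := by
    intro z hz
    refine Set.mem_iUnion.2 ⟨fun i => -⌊z i / L⌋, ?_⟩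
    refine ⟨?_, frac_mem_torusBox hL z⟩
    exact (hinv (fun i => -⌊z i / L⌋) z).1 hz
  refine le_antisymm ?_ (zero_le)
  calc volume s ≤ ∑' k : Fin n → ℤ,
        volume ((fun z => z + fun i => ((k i : ℤ) : ℝ) * L) ⁻¹' (s ∩ torusBox L n)) :=
        (measure_mono hsub).trans (measure_iUnion_le _)
    _ = 0 := by
        simp only [measure_preimage_add_right, hnull, tsum_zero]

lemma norm_sub_le_of_ae_fderiv_bound {n : ℕ} {K : (Fin n → ℝ) → ℝ} (hK : Differentiable ℝ K)
    {C : ℝ} (hC : 0 ≤ C)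
    (hb : ∀ᵐ z ∂(volume : Measure (Fin n → ℝ)), ‖fderiv ℝ K z‖ ≤ C)
    (a b : Fin n → ℝ) : ‖K b - K a‖ ≤ C * ‖b - a‖ := by
  classical
  set S : Set (Fin n → ℝ) := {z | ¬ ‖fderiv ℝ K z‖ ≤ C} with hSdef
  have hS : volume S = 0 := hb
  set S' := toMeasurable volume S with hS'def
  have hS'meas : MeasurableSet S' := measurableSet_toMeasurable _ _
  have hS'null : volume S' = 0 := by rw [measure_toMeasurable]; exact hS
  have hSS' : S ⊆ S' := subset_toMeasurable _ _
  -- the good set of translations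
  have key : ∀ᵐ w ∂(volume : Measure (Fin n → ℝ)),
      ‖K (w + b) - K (w + a)‖ ≤ C * ‖b - a‖ := by
    set E : Set ((Fin n → ℝ) × ℝ) := {p | p.1 + a + p.2 • (b - a) ∈ S'} with hEdef
    have hEmeas : MeasurableSet E := by
      have hcont : Continuous fun p : (Fin n → ℝ) × ℝ => p.1 + a + p.2 • (b - a) := by
        fun_prop
      exact hcont.measurable hS'meas
    have hEnull : (volume.prod volume) E = 0 := by
      rw [Measure.prod_apply_symm hEmeas]
      have : ∀ t : ℝ, volume ((fun w : Fin n → ℝ => (w, t)) ⁻¹' E) = 0 := by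
        intro t
        have : ((fun w : Fin n → ℝ => (w, t)) ⁻¹' E)
            = (fun w : Fin n → ℝ => w + (a + t • (b - a))) ⁻¹' S' := by
          ext w
          simp only [Set.mem_preimage, hEdef, Set.mem_setOf_eq, add_assoc]
        rw [this, measure_preimage_add_right]
        exact hS'null
      simp only [this, MeasureTheory.lintegral_zero]
    have hall : ∀ᵐ p ∂((volume : Measure (Fin n → ℝ)).prod (volume : Measure ℝ)), p ∉ E := by
      rw [MeasureTheory.ae_iff]
      simpa using hEnull
    filter_upwards [Measure.ae_ae_of_ae_prod hall] with w hw
    set g : ℝ → ℝ := fun t => K (w + a + t • (b - a)) with hgdef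
    set g' : ℝ → ℝ := fun t => fderiv ℝ K (w + a + t • (b - a)) (b - a) with hg'def
    have hline : ∀ t : ℝ, HasDerivAt (fun t : ℝ => w + a + t • (b - a)) (b - a) t := by
      intro t
      have h1 : HasDerivAt (fun t : ℝ => t • (b - a)) ((1 : ℝ) • (b - a)) t :=
        (hasDerivAt_id t).smul_const (b - a)
      simpa using h1.const_add (w + a)
    have hg : ∀ t : ℝ, HasDerivAt g (g' t) t := fun t =>
      ((hK _).hasFDerivAt).comp_hasDerivAt t (hline t)
    have hg'meas : Measurable g' := by
      exact (measurable_fderiv_apply_const ℝ K (b - a)).comp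
        (by fun_prop : Continuous fun t : ℝ => w + a + t • (b - a)).measurable
    have hbd : ∀ᵐ t ∂(volume : Measure ℝ), ‖g' t‖ ≤ C * ‖b - a‖ := by
      filter_upwards [hw] with t ht
      have hmem : w + a + t • (b - a) ∉ S := fun h => ht (hSS' h)
      have hle : ‖fderiv ℝ K (w + a + t • (b - a))‖ ≤ C := not_not.1 hmem
      calc ‖g' t‖ ≤ ‖fderiv ℝ K (w + a + t • (b - a))‖ * ‖b - a‖ :=
            ContinuousLinearMap.le_opNorm _ _
        _ ≤ C * ‖b - a‖ := by
            exact mul_le_mul_of_nonneg_right hle (norm_nonneg _)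
    have hii : IntervalIntegrable g' volume 0 1 :=
      (intervalIntegrable_const (c := C * ‖b - a‖)).mono_fun' hg'meas.aestronglyMeasurable
        (ae_restrict_of_ae hbd)
    have hftc : ∫ t in (0:ℝ)..1, g' t = g 1 - g 0 :=
      intervalIntegral.integral_eq_sub_of_hasDerivAt (fun t _ => hg t) hii
    have hg1 : g 1 = K (w + b) := by
      simp only [hgdef, one_smul]
      congr 1
      abel
    have hg0 : g 0 = K (w + a) := by simp [hgdef]
    have hnorm : ‖∫ t in (0:ℝ)..1, g' t‖ ≤ |∫ t in (0:ℝ)..1, C * ‖b - a‖| :=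
      intervalIntegral.norm_integral_le_abs_of_norm_le (ae_restrict_of_ae hbd)
        (intervalIntegrable_const)
    have hval : |∫ t in (0:ℝ)..1, C * ‖b - a‖| = C * ‖b - a‖ := by
      simp [intervalIntegral.integral_const]
      simp [abs_of_nonneg hC, hC]
    rw [hftc, hg1, hg0] at hnorm
    rw [hval] at hnorm
    exact hnorm
  -- choose a sequence of good translations tending to 0
  have hsel : ∀ m : ℕ, ∃ w : Fin n → ℝ,
      ‖K (w + b) - K (w + a)‖ ≤ C * ‖b - a‖ ∧ ‖w‖ < 1 / (m + 1) := by
    intro m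
    set G := {w : Fin n → ℝ | ‖K (w + b) - K (w + a)‖ ≤ C * ‖b - a‖} with hGdef
    have hGc : volume Gᶜ = 0 := key
    have hball : (0 : ENNReal) < volume (Metric.ball (0 : Fin n → ℝ) (1 / (m + 1))) :=
      Metric.measure_ball_pos _ _ (by positivity)
    have hne : (G ∩ Metric.ball (0 : Fin n → ℝ) (1 / (m + 1))).Nonempty := by
      by_contra hemp
      rw [Set.not_nonempty_iff_eq_empty] at hemp
      have hsub : Metric.ball (0 : Fin n → ℝ) (1 / (m + 1)) ⊆ Gᶜ := by
        intro z hz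
        intro hzG
        exact Set.eq_empty_iff_forall_notMem.1 hemp z ⟨hzG, hz⟩
      exact absurd (measure_mono_null hsub hGc) hball.ne'
    obtain ⟨w, hwG, hwb⟩ := hne
    refine ⟨w, hwG, ?_⟩
    simpa using hwb
  choose w hwG hwlt using hsel
  have hw0 : Filter.Tendsto w Filter.atTop (nhds 0) := by
    rw [tendsto_iff_norm_sub_tendsto_zero]
    simp only [sub_zero]
    refine squeeze_zero (fun m => norm_nonneg _) (fun m => (hwlt m).le) ?_
    exact tendsto_one_div_add_atTop_nhds_zero_nat
  have hlim : Filter.Tendsto (fun m => ‖K (w m + b) - K (w m + a)‖)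
      Filter.atTop (nhds ‖K b - K a‖) := by
    have hcont : Continuous fun z : Fin n → ℝ => ‖K (z + b) - K (z + a)‖ := by
      have := hK.continuous
      fun_prop
    have := (hcont.tendsto 0).comp hw0
    simpa [Function.comp_def] using this
  exact le_of_tendsto hlim (Filter.Eventually.of_forall hwG)

section Conv

variable {n : ℕ} {L : ℝ} {K v : (Fin n → ℝ) → ℝ} {C : ℝ}

lemma norm_le_of_mem_torusBox (hL : 0 < L) {y : Fin n → ℝ} (hy : y ∈ torusBox L n) :
    ‖y‖ ≤ L := by
  rw [pi_norm_le_iff_of_nonneg hL.le]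
  intro i
  have := (Set.mem_univ_pi.1 hy) i
  rw [Real.norm_eq_abs, abs_le]
  exact ⟨by linarith [this.1], this.2.le⟩

lemma integrand_meas (hK : Differentiable ℝ K)
    (hv : Integrable v (volume.restrict (torusBox L n))) (x : Fin n → ℝ) :
    AEStronglyMeasurable (fun y => K (x - y) * v y) (volume.restrict (torusBox L n)) :=
  ((hK.continuous.comp (continuous_const.sub continuous_id)).aestronglyMeasurable).mul hv.1

lemma integrand_int (hL : 0 < L) (hK : Differentiable ℝ K) (hC : 0 ≤ C)
    (hKlip : ∀ a b : Fin n → ℝ, ‖K b - K a‖ ≤ C * ‖b - a‖)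
    (hv : Integrable v (volume.restrict (torusBox L n))) (x : Fin n → ℝ) :
    Integrable (fun y => K (x - y) * v y) (volume.restrict (torusBox L n)) := by
  refine Integrable.mono' (hv.norm.const_mul (‖K x‖ + C * L)) (integrand_meas hK hv x) ?_
  have hbox : MeasurableSet (torusBox L n) :=
    MeasurableSet.univ_pi fun _ => measurableSet_Ico
  rw [ae_restrict_iff' hbox]
  refine Filter.Eventually.of_forall fun y hy => ?_
  have h1 : ‖K (x - y) - K x‖ ≤ C * ‖y‖ := by
    have := hKlip x (x - y)
    simpa using this
  have h2 : ‖y‖ ≤ L := norm_le_of_mem_torusBox hL hy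
  have h3 : ‖K (x - y)‖ ≤ ‖K x‖ + C * L := by
    calc ‖K (x - y)‖ = ‖K x + (K (x - y) - K x)‖ := by ring_nf
      _ ≤ ‖K x‖ + ‖K (x - y) - K x‖ := norm_add_le _ _
      _ ≤ ‖K x‖ + C * L := by
          refine add_le_add le_rfl (h1.trans ?_)
          exact mul_le_mul_of_nonneg_left h2 hC
  calc ‖K (x - y) * v y‖ = ‖K (x - y)‖ * ‖v y‖ := norm_mul _ _
    _ ≤ (‖K x‖ + C * L) * ‖v y‖ := by
        exact mul_le_mul_of_nonneg_right h3 (norm_nonneg _)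

lemma integrandD_meas (hK : Differentiable ℝ K)
    (hv : Integrable v (volume.restrict (torusBox L n))) (x : Fin n → ℝ) :
    AEStronglyMeasurable (fun y => v y • fderiv ℝ K (x - y))
      (volume.restrict (torusBox L n)) := by
  refine AEStronglyMeasurable.smul hv.1 ?_
  exact ((measurable_fderiv ℝ K).comp
    (continuous_const.sub continuous_id).measurable).aestronglyMeasurable

lemma integrandD_int (hK : Differentiable ℝ K) (hCb : ∀ z, ‖fderiv ℝ K z‖ ≤ C)
    (hv : Integrable v (volume.restrict (torusBox L n))) (x : Fin n → ℝ) :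
    Integrable (fun y => v y • fderiv ℝ K (x - y)) (volume.restrict (torusBox L n)) := by
  refine Integrable.mono' (hv.norm.const_mul C) (integrandD_meas hK hv x) ?_
  refine Filter.Eventually.of_forall fun y => ?_
  rw [norm_smul]
  calc ‖v y‖ * ‖fderiv ℝ K (x - y)‖ ≤ ‖v y‖ * C :=
        mul_le_mul_of_nonneg_left (hCb _) (norm_nonneg _)
    _ = C * ‖v y‖ := mul_comm _ _

lemma torusConv_hasFDerivAt (hL : 0 < L) (hK : Differentiable ℝ K) (hC : 0 ≤ C)
    (hCb : ∀ z, ‖fderiv ℝ K z‖ ≤ C)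
    (hKlip : ∀ a b : Fin n → ℝ, ‖K b - K a‖ ≤ C * ‖b - a‖)
    (hv : Integrable v (volume.restrict (torusBox L n))) (x : Fin n → ℝ) :
    HasFDerivAt (torusConv L K v)
      (∫ y in torusBox L n, v y • fderiv ℝ K (x - y)) x := by
  have h := hasFDerivAt_integral_of_dominated_of_fderiv_le (𝕜 := ℝ)
    (μ := volume.restrict (torusBox L n))
    (F := fun x' y => K (x' - y) * v y)
    (F' := fun x' y => v y • fderiv ℝ K (x' - y))
    (x₀ := x) (bound := fun y => C * ‖v y‖)
    (Filter.univ_mem)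
    (Filter.Eventually.of_forall fun x' => integrand_meas hK hv x')
    (integrand_int hL hK hC hKlip hv x)
    (integrandD_meas hK hv x)
    (Filter.Eventually.of_forall fun y => ?_)
    (hv.norm.const_mul C)
    (Filter.Eventually.of_forall fun y => ?_)
  · exact h
  · intro x' _
    show ‖v y • fderiv ℝ K (x' - y)‖ ≤ C * ‖v y‖
    rw [norm_smul]
    calc ‖v y‖ * ‖fderiv ℝ K (x' - y)‖ ≤ ‖v y‖ * C :=
          mul_le_mul_of_nonneg_left (hCb _) (norm_nonneg _)
      _ = C * ‖v y‖ := mul_comm _ _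
  · intro x' _
    show HasFDerivAt (fun x' => K (x' - y) * v y) (v y • fderiv ℝ K (x' - y)) x'
    have hKd : HasFDerivAt (fun z => K (z - y)) (fderiv ℝ K (x' - y)) x' := by
      have := ((hK (x' - y)).hasFDerivAt).comp x' ((hasFDerivAt_id x').sub_const y)
      exact this
    have := hKd.const_mul (v y)
    simpa [mul_comm (v y)] using this

lemma norm_convD_le (hK : Differentiable ℝ K) (hC : 0 ≤ C)
    (hCb : ∀ z, ‖fderiv ℝ K z‖ ≤ C)
    (hv : Integrable v (volume.restrict (torusBox L n))) (x : Fin n → ℝ) :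
    ‖∫ y in torusBox L n, v y • fderiv ℝ K (x - y)‖
      ≤ C * ∫ y in torusBox L n, ‖v y‖ := by
  calc ‖∫ y in torusBox L n, v y • fderiv ℝ K (x - y)‖
      ≤ ∫ y in torusBox L n, C * ‖v y‖ := by
        refine norm_integral_le_of_norm_le (hv.norm.const_mul C) ?_
        refine Filter.Eventually.of_forall fun y => ?_
        rw [norm_smul]
        calc ‖v y‖ * ‖fderiv ℝ K (x - y)‖ ≤ ‖v y‖ * C :=
              mul_le_mul_of_nonneg_left (hCb _) (norm_nonneg _)
          _ = C * ‖v y‖ := mul_comm _ _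
    _ = C * ∫ y in torusBox L n, ‖v y‖ := integral_const_mul _ _

end Conv

/-- **Lipschitz estimate for the nonlinearity.** For `v₁, v₂ ∈ L²(𝕋)` with
`‖v₁‖_{L²}, ‖v₂‖_{L²} ≤ M` and `K` differentiable with bounded gradient,
`‖v₁∇(K∗v₁) − v₂∇(K∗v₂)‖_{L²} ≤ 2M |𝕋|^{1/2} ‖∇K‖_{L^∞} ‖v₁ − v₂‖_{L²}`. -/
theorem stmt16 (n : ℕ) (L : ℝ) (hL : 0 < L) (M : ℝ) (hM : 0 < M)
    (μ : Measure (Fin n → ℝ)) (hμ : μ = volume.restrict (torusBox L n))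
    (K v₁ v₂ : (Fin n → ℝ) → ℝ)
    (hK : Differentiable ℝ K) (hKper : TorusPeriodic L K)
    (hK' : eLpNorm (fun x => ‖fderiv ℝ K x‖) ⊤ μ < ⊤)
    (hv₁ : MemLp v₁ 2 μ) (hv₂ : MemLp v₂ 2 μ)
    (hv₁per : TorusPeriodic L v₁) (hv₂per : TorusPeriodic L v₂)
    (hv₁M : eLpNorm v₁ 2 μ ≤ ENNReal.ofReal M)
    (hv₂M : eLpNorm v₂ 2 μ ≤ ENNReal.ofReal M) :
    eLpNorm
        (fun x => ‖v₁ x • (fun i => fderiv ℝ (torusConv L K v₁) x (Pi.single i 1))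
          - v₂ x • (fun i => fderiv ℝ (torusConv L K v₂) x (Pi.single i 1))‖) 2 μ
      ≤ ENNReal.ofReal (2 * M) * (μ Set.univ) ^ ((1 : ℝ)/2)
        * eLpNorm (fun x => ‖fderiv ℝ K x‖) ⊤ μ
        * eLpNorm (v₁ - v₂) 2 μ := by
  classical
  subst hμ
  set μ := volume.restrict (torusBox L n) with hμdef
  have hbox : MeasurableSet (torusBox L n) :=
    MeasurableSet.univ_pi fun _ => measurableSet_Ico
  have hboxvol : volume (torusBox L n) = ENNReal.ofReal L ^ n := by
    rw [torusBox, volume_pi_pi]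
    simp [Real.volume_Ico]
  haveI : IsFiniteMeasure μ := by
    constructor
    rw [hμdef, Measure.restrict_apply_univ, hboxvol]
    exact ENNReal.pow_lt_top ENNReal.ofReal_lt_top
  -- the essential bound on the gradient of K
  set Ce := eLpNorm (fun x => ‖fderiv ℝ K x‖) ⊤ μ with hCedef
  set C := Ce.toReal with hCdef
  have hC : 0 ≤ C := ENNReal.toReal_nonneg
  have hae_box : ∀ᵐ z ∂μ, ‖fderiv ℝ K z‖ ≤ C := by
    have h1 : ∀ᵐ z ∂μ, (‖(fun x => ‖fderiv ℝ K x‖) z‖₊ : ENNReal)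
        ≤ eLpNormEssSup (fun x => ‖fderiv ℝ K x‖) μ := ae_le_eLpNormEssSup
    have h2 : eLpNormEssSup (fun x => ‖fderiv ℝ K x‖) μ = Ce := by
      rw [hCedef, eLpNorm_exponent_top]
    filter_upwards [h1] with z hz
    rw [h2] at hz
    have := ENNReal.toReal_mono hK'.ne hz
    simpa using this
  -- globalize by periodicity
  have hae_glob : ∀ᵐ z ∂(volume : Measure (Fin n → ℝ)), ‖fderiv ℝ K z‖ ≤ C := by
    rw [MeasureTheory.ae_iff]
    refine null_of_periodic_null_box hL _ ?_ ?_
    · intro k z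
      have hper := fderiv_mem_periodGroup hK (lattice_mem_periodGroup K hKper k) z
      simp only [Set.mem_setOf_eq]
      rw [hper]
    · have := hae_box
      rw [MeasureTheory.ae_iff, hμdef, Measure.restrict_apply' hbox] at this
      exact this
  have hKlip := norm_sub_le_of_ae_fderiv_bound hK hC hae_glob
  have hCb : ∀ z, ‖fderiv ℝ K z‖ ≤ C := by
    have hlip : LipschitzWith ⟨C, hC⟩ K := by
      refine LipschitzWith.of_dist_le_mul fun x y => ?_
      rw [dist_eq_norm, dist_eq_norm]
      exact hKlip y x
    intro z
    exact norm_fderiv_le_of_lipschitz ℝ hlip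
  -- integrability
  have hv₁i : Integrable v₁ μ := hv₁.integrable one_le_two
  have hv₂i : Integrable v₂ μ := hv₂.integrable one_le_two
  have hw : MemLp (v₁ - v₂) 2 μ := hv₁.sub hv₂
  have hwi : Integrable (v₁ - v₂) μ := hw.integrable one_le_two
  -- the derivative of the convolutions
  have hD₁ : ∀ x, fderiv ℝ (torusConv L K v₁) x
      = ∫ y in torusBox L n, v₁ y • fderiv ℝ K (x - y) := fun x =>
    (torusConv_hasFDerivAt hL hK hC hCb hKlip hv₁i x).fderiv
  have hD₂ : ∀ x, fderiv ℝ (torusConv L K v₂) x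
      = ∫ y in torusBox L n, v₂ y • fderiv ℝ K (x - y) := fun x =>
    (torusConv_hasFDerivAt hL hK hC hCb hKlip hv₂i x).fderiv
  set A : (Fin n → ℝ) → (Fin n → ℝ) :=
    fun x => fun i => fderiv ℝ (torusConv L K v₁) x (Pi.single i 1) with hAdef
  set B : (Fin n → ℝ) → (Fin n → ℝ) :=
    fun x => fun i => fderiv ℝ (torusConv L K v₂) x (Pi.single i 1) with hBdef
  -- abstract norm bound for the gradient vector
  have hvec : ∀ (u : (Fin n → ℝ) → ℝ), Integrable u μ → ∀ x,
      ‖(fun i => (∫ y in torusBox L n, u y • fderiv ℝ K (x - y)) (Pi.single i 1))‖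
        ≤ C * ∫ y in torusBox L n, ‖u y‖ := by
    intro u hu x
    have hnn : 0 ≤ C * ∫ y in torusBox L n, ‖u y‖ := by
      have : 0 ≤ ∫ y in torusBox L n, ‖u y‖ :=
        integral_nonneg fun y => norm_nonneg _
      positivity
    rw [pi_norm_le_iff_of_nonneg hnn]
    intro i
    have hop := ContinuousLinearMap.le_opNorm
      (∫ y in torusBox L n, u y • fderiv ℝ K (x - y)) (Pi.single i (1:ℝ))
    have hsn : ‖(Pi.single i (1:ℝ) : Fin n → ℝ)‖ = 1 := by
      rw [Pi.norm_single (ι := Fin n) (G := fun _ => ℝ)]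
      exact norm_one
    rw [hsn, mul_one] at hop
    exact hop.trans (norm_convD_le hK hC hCb hu x)
  set I₁ : ℝ := ∫ y in torusBox L n, ‖v₁ y‖ with hI₁def
  set Iw : ℝ := ∫ y in torusBox L n, ‖(v₁ - v₂) y‖ with hIwdef
  have hI₁nn : 0 ≤ I₁ := integral_nonneg fun y => norm_nonneg _
  have hIwnn : 0 ≤ Iw := integral_nonneg fun y => norm_nonneg _
  have hAbd : ∀ x, ‖A x‖ ≤ C * I₁ := by
    intro x
    rw [hAdef]
    simp only [hD₁ x]
    exact hvec v₁ hv₁i x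
  have hABbd : ∀ x, ‖A x - B x‖ ≤ C * Iw := by
    intro x
    have hsplit : A x - B x
        = fun i => (∫ y in torusBox L n, (v₁ - v₂) y • fderiv ℝ K (x - y))
            (Pi.single i 1) := by
      funext i
      have hsub : (fun y => (v₁ - v₂) y • fderiv ℝ K (x - y))
          = fun y => v₁ y • fderiv ℝ K (x - y) - v₂ y • fderiv ℝ K (x - y) := by
        funext y
        rw [Pi.sub_apply]
        ext z
        simp [sub_mul]
      rw [hsub, integral_sub (integrandD_int hK hCb hv₁i x) (integrandD_int hK hCb hv₂i x)]
      simp only [Pi.sub_apply, hAdef, hBdef, hD₁ x, hD₂ x,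
        ContinuousLinearMap.sub_apply]
    rw [hsplit]
    exact hvec (v₁ - v₂) hwi x
  -- measurability of the pieces
  have hAmeas : AEStronglyMeasurable A μ := by
    refine Measurable.aestronglyMeasurable ?_
    exact measurable_pi_lambda _ fun i =>
      measurable_fderiv_apply_const ℝ (torusConv L K v₁) (Pi.single i 1)
  have hBmeas : AEStronglyMeasurable B μ := by
    refine Measurable.aestronglyMeasurable ?_
    exact measurable_pi_lambda _ fun i =>
      measurable_fderiv_apply_const ℝ (torusConv L K v₂) (Pi.single i 1)
  have hg₁meas : AEStronglyMeasurable (fun x => (v₁ x - v₂ x) • A x) μ :=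
    (hv₁.1.sub hv₂.1).smul hAmeas
  have hg₂meas : AEStronglyMeasurable (fun x => v₂ x • (A x - B x)) μ :=
    hv₂.1.smul (hAmeas.sub hBmeas)
  -- the splitting
  have hfun : (fun x => ‖v₁ x • (fun i => fderiv ℝ (torusConv L K v₁) x (Pi.single i 1))
          - v₂ x • (fun i => fderiv ℝ (torusConv L K v₂) x (Pi.single i 1))‖)
      = fun x => ‖(fun x => (v₁ x - v₂ x) • A x) x + (fun x => v₂ x • (A x - B x)) x‖ := by
    funext x
    congr 1
    show v₁ x • A x - v₂ x • B x = (v₁ x - v₂ x) • A x + v₂ x • (A x - B x)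
    rw [sub_smul, smul_sub]
    abel
  rw [hfun, eLpNorm_norm]
  -- L² norms of the functions
  set W := eLpNorm (v₁ - v₂) 2 μ with hWdef
  have hbound : ∀ (φ : (Fin n → ℝ) → ℝ) (V : (Fin n → ℝ) → (Fin n → ℝ)) (c : ℝ),
      0 ≤ c → (∀ x, ‖V x‖ ≤ c) →
      eLpNorm (fun x => φ x • V x) 2 μ ≤ ENNReal.ofReal c * eLpNorm φ 2 μ := by
    intro φ V c hc hV
    have h1 : eLpNorm (fun x => φ x • V x) 2 μ ≤ eLpNorm (c • φ) 2 μ := by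
      refine eLpNorm_mono fun x => ?_
      rw [norm_smul]
      calc ‖φ x‖ * ‖V x‖ ≤ ‖φ x‖ * c := mul_le_mul_of_nonneg_left (hV x) (norm_nonneg _)
        _ = c * ‖φ x‖ := mul_comm _ _
        _ ≤ ‖c‖ * ‖φ x‖ := mul_le_mul_of_nonneg_right (le_abs_self c) (norm_nonneg _)
        _ = ‖(c • φ) x‖ := by
            simp [Real.norm_eq_abs, abs_mul, abs_of_nonneg hc]
    refine h1.trans ?_
    rw [eLpNorm_const_smul]
    have hcoe : ‖c‖ₑ = ENNReal.ofReal c := by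
      rw [Real.enorm_eq_ofReal hc]
    rw [hcoe]
  have hT₁ : eLpNorm (fun x => (v₁ x - v₂ x) • A x) 2 μ ≤ ENNReal.ofReal (C * I₁) * W := by
    have := hbound (fun x => v₁ x - v₂ x) A (C * I₁) (by positivity) hAbd
    exact this
  have hT₂ : eLpNorm (fun x => v₂ x • (A x - B x)) 2 μ
      ≤ ENNReal.ofReal (C * Iw) * eLpNorm v₂ 2 μ :=
    hbound v₂ (fun x => A x - B x) (C * Iw) (by positivity) hABbd
  -- L¹–L² comparison
  have hL1L2 : ∀ (u : (Fin n → ℝ) → ℝ), MemLp u 2 μ → Integrable u μ →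
      ENNReal.ofReal (∫ y in torusBox L n, ‖u y‖)
        ≤ eLpNorm u 2 μ * (μ Set.univ) ^ ((1:ℝ)/2) := by
    intro u hu hui
    have h1 : ENNReal.ofReal (∫ y in torusBox L n, ‖u y‖) = eLpNorm u 1 μ := by
      rw [eLpNorm_one_eq_lintegral_enorm, hμdef]
      exact ofReal_integral_norm_eq_lintegral_enorm hui
    rw [h1]
    have h2 := eLpNorm_le_eLpNorm_mul_rpow_measure_univ (p := 1) (q := 2)
      one_le_two hu.1
    have h3 : (1 : ℝ) / (1 : ENNReal).toReal - 1 / (2 : ENNReal).toReal = (1:ℝ)/2 := by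
      norm_num
    rwa [h3] at h2
  have hCeC : ENNReal.ofReal C = Ce := ENNReal.ofReal_toReal hK'.ne
  have hWtop : W ≠ ⊤ := hw.eLpNorm_ne_top
  -- final chain
  calc eLpNorm (fun x => (fun x => (v₁ x - v₂ x) • A x) x
          + (fun x => v₂ x • (A x - B x)) x) 2 μ
      ≤ eLpNorm (fun x => (v₁ x - v₂ x) • A x) 2 μ
        + eLpNorm (fun x => v₂ x • (A x - B x)) 2 μ :=
        eLpNorm_add_le hg₁meas hg₂meas one_le_two
    _ ≤ ENNReal.ofReal (C * I₁) * W + ENNReal.ofReal (C * Iw) * ENNReal.ofReal M := by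
        refine add_le_add hT₁ ?_
        exact hT₂.trans (mul_le_mul_right hv₂M _)
    _ ≤ (Ce * (ENNReal.ofReal M * (μ Set.univ) ^ ((1:ℝ)/2))) * W
        + (Ce * (W * (μ Set.univ) ^ ((1:ℝ)/2))) * ENNReal.ofReal M := by
        refine add_le_add ?_ ?_
        · refine mul_le_mul_left ?_ W
          rw [ENNReal.ofReal_mul hC, hCeC]
          refine mul_le_mul_right ?_ Ce
          exact (hL1L2 v₁ hv₁ hv₁i).trans (mul_le_mul_left hv₁M _)
        · refine mul_le_mul_left ?_ _
          rw [ENNReal.ofReal_mul hC, hCeC]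
          refine mul_le_mul_right ?_ Ce
          exact hL1L2 (v₁ - v₂) hw hwi
    _ = ENNReal.ofReal (2 * M) * (μ Set.univ) ^ ((1:ℝ)/2) * Ce * W := by
        rw [ENNReal.ofReal_mul (by norm_num : (0:ℝ) ≤ 2), ENNReal.ofReal_ofNat]
        ring
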